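/- Let (α_j)_{j≥1} and (r_j)_{j≥1} be real sequences with α_j ≥ r_j ≥ 0 for all j, and let (y_j)_{j≥1} be arbitrary reals. Set v_k = ∏_{j=1}^{k} 1/(1 + r_j) and v_k^* = ∏_{j=1}^{k} 1/(1 + α_j) (with v_0 = v_0^* = 1), and define S_k^{**} = Σ_{j=1}^{k} v_{j−1}^* y_j and S_k^{*} = Σ_{j=1}^{k} v_{j−1} y_j, with S_0^{**} = S_0^{*} = 0. Then for every n ≥ 0: max_{0≤k≤n} S_k^{**} ≤ max_{0≤k≤n} S_k^{*}. -/

import Mathlib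

/-- Lemma 2: comparison of discounted maxima, deterministic form.
Sequences are 1-indexed: `v k = ∏_{j=1}^{k} 1/(1+r_j)`, `v* k = ∏_{j=1}^{k} 1/(1+α_j)`
(so `v 0 = v* 0 = 1`), `S** k = ∑_{j=1}^{k} v*_{j-1} y_j`, `S* k = ∑_{j=1}^{k} v_{j-1} y_j`
(so `S** 0 = S* 0 = 0`).  If `α_j ≥ r_j ≥ 0` for all `j ≥ 1`, then for every `n ≥ 0`,
`max_{0 ≤ k ≤ n} S**_k ≤ max_{0 ≤ k ≤ n} S*_k`. -/
theorem stmt9 (α r y : ℕ → ℝ)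
    (hr : ∀ j : ℕ, 1 ≤ j → 0 ≤ r j)
    (hαr : ∀ j : ℕ, 1 ≤ j → r j ≤ α j)
    (v vstar : ℕ → ℝ)
    (hv : ∀ k, v k = ∏ j ∈ Finset.Icc 1 k, (1 + r j)⁻¹)
    (hvstar : ∀ k, vstar k = ∏ j ∈ Finset.Icc 1 k, (1 + α j)⁻¹)
    (Sss Ss : ℕ → ℝ)
    (hSss : ∀ k, Sss k = ∑ j ∈ Finset.Icc 1 k, vstar (j - 1) * y j)
    (hSs : ∀ k, Ss k = ∑ j ∈ Finset.Icc 1 k, v (j - 1) * y j) :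
    ∀ n : ℕ, (Finset.range (n + 1)).sup' ⟨0, by simp⟩ Sss ≤
      (Finset.range (n + 1)).sup' ⟨0, by simp⟩ Ss := by
  have hr' : ∀ j : ℕ, 1 ≤ j → (0:ℝ) < 1 + r j := fun j hj => by linarith [hr j hj]
  have hα' : ∀ j : ℕ, 1 ≤ j → (0:ℝ) < 1 + α j := fun j hj => by
    linarith [hr j hj, hαr j hj]
  have hvpos : ∀ k, 0 < v k := by
    intro k; rw [hv]
    exact Finset.prod_pos fun j hj => inv_pos.2 (hr' j (Finset.mem_Icc.1 hj).1)
  have hvspos : ∀ k, 0 < vstar k := by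
    intro k; rw [hvstar]
    exact Finset.prod_pos fun j hj => inv_pos.2 (hα' j (Finset.mem_Icc.1 hj).1)
  set w : ℕ → ℝ := fun k => vstar k / v k with hw
  have hwpos : ∀ k, 0 < w k := fun k => div_pos (hvspos k) (hvpos k)
  have hvsucc : ∀ k, v (k+1) = v k * (1 + r (k+1))⁻¹ := by
    intro k; rw [hv, hv, Finset.prod_Icc_succ_top (Nat.le_add_left 1 k)]
  have hvssucc : ∀ k, vstar (k+1) = vstar k * (1 + α (k+1))⁻¹ := by
    intro k; rw [hvstar, hvstar, Finset.prod_Icc_succ_top (Nat.le_add_left 1 k)]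
  have hwmono : ∀ k, w (k+1) ≤ w k := by
    intro k
    have h1 := hr' (k+1) (Nat.le_add_left 1 k)
    have h2 := hα' (k+1) (Nat.le_add_left 1 k)
    have h3 := hαr (k+1) (Nat.le_add_left 1 k)
    have : w (k+1) = w k * ((1 + r (k+1)) / (1 + α (k+1))) := by
      simp only [hw, hvsucc, hvssucc]
      field_simp
    rw [this]
    have hle : (1 + r (k+1)) / (1 + α (k+1)) ≤ 1 := by
      rw [div_le_one h2]; linarith
    nlinarith [hwpos k]
  have hw0 : w 0 = 1 := by
    simp [hw, hv 0, hvstar 0]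
  have hwle1 : ∀ k, w k ≤ 1 := by
    intro k
    induction k with
    | zero => rw [hw0]
    | succ m ih => exact (hwmono m).trans ih
  set M : ℕ → ℝ := fun n => (Finset.range (n + 1)).sup' ⟨0, by simp⟩ Ss with hM
  have hSs0 : Ss 0 = 0 := by simp [hSs 0]
  have hSsM : ∀ k n, k ≤ n → Ss k ≤ M n := by
    intro k n hkn
    exact Finset.le_sup' Ss (Finset.mem_range.2 (Nat.lt_succ_of_le hkn))
  have hM0 : ∀ n, 0 ≤ M n := fun n => hSs0 ▸ hSsM 0 n (Nat.zero_le n)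
  have hMmono : ∀ k n, k ≤ n → M k ≤ M n := by
    intro k n hkn
    apply Finset.sup'_le
    intro b hb
    exact hSsM b n (le_trans (Nat.lt_succ_iff.1 (Finset.mem_range.1 hb)) hkn)
  have hSsssucc : ∀ k, Sss (k+1) = Sss k + vstar k * y (k+1) := by
    intro k
    rw [hSss, hSss, Finset.sum_Icc_succ_top (Nat.le_add_left 1 k)]
    simp
  have hSssucc : ∀ k, Ss (k+1) = Ss k + v k * y (k+1) := by
    intro k
    rw [hSs, hSs, Finset.sum_Icc_succ_top (Nat.le_add_left 1 k)]
    simp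
  have hvsw : ∀ k, vstar k = w k * v k := by
    intro k
    show vstar k = vstar k / v k * v k
    rw [div_mul_cancel₀ _ (hvpos k).ne']
  have key : ∀ k, Sss k ≤ w k * Ss k + (1 - w k) * M k := by
    intro k
    induction k with
    | zero =>
      simp [hSss 0, hSs0, hw0]
    | succ m ih =>
      have h1 : Sss (m+1) ≤ w m * Ss (m+1) + (1 - w m) * M m := by
        rw [hSsssucc m, hvsw m, hSssucc m]
        nlinarith
      have h2 : Ss (m+1) ≤ M (m+1) := hSsM (m+1) (m+1) le_rfl
      have h3 : M m ≤ M (m+1) := hMmono m (m+1) (Nat.le_succ m)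
      have h4 : w (m+1) ≤ w m := hwmono m
      nlinarith [hwle1 m, hwpos (m+1)]
  intro n
  apply Finset.sup'_le
  intro k hk
  have hkn : k ≤ n := Nat.lt_succ_iff.1 (Finset.mem_range.1 hk)
  have := key k
  have h1 : Ss k ≤ M k := hSsM k k le_rfl
  have h2 : M k ≤ M n := hMmono k n hkn
  have h3 : 0 ≤ M k := hM0 k
  nlinarith [hwpos k, hwle1 k]
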